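/- arXiv:2311.08058 — 3 statements merged into one kernel-verified Lean document; each statement's English description precedes it below -/
import Mathlib

section
/- Let d ≥ 1, let μ be a Radon measure on ℝ^d that is absolutely continuous with respect to the Lebesgue measure 𝓛^d, let 1 ≤ p < ∞, and let p' be the Hölder conjugate of p. If (u_n) is a sequence in C¹_c(ℝ^d) such that u_n → 0 uniformly, the Lipschitz constants Lip(u_n) are uniformly bounded, and there is w ∈ L^p(μ; ℝ^d) such that ∫ ⟨∇u_n, φ⟩ dμ → ∫ ⟨w, φ⟩ dμ for every φ ∈ L^{p'}(μ; ℝ^d) (i.e. ∇u_n → w weakly in L^p(μ; ℝ^d)), then w = 0 μ-almost everywhere. (This is closability of the gradient from Lip(ℝ^d) to L^p(μ) endowed with the weak topology.) -/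
open MeasureTheory Filter Topology ENNReal NNReal RealInnerProductSpace
open scoped Convolution

section Aux

variable {d : ℕ}

local notation "E" => EuclideanSpace ℝ (Fin d)

/-- Smooth compactly supported functions approximate integrable functions in `L¹`. -/
lemma aux_arith {a ε : ℝ} (ha : 0 ≤ a) (hε : 0 ≤ ε) : a * (ε / (a + 1)) ≤ ε := by
  have h1 : a * (ε/(a+1)) ≤ (a+1) * (ε/(a+1)) :=
    mul_le_mul_of_nonneg_right (by linarith) (by positivity)
  have h2 : (a+1) * (ε/(a+1)) = ε := by field_simp
  linarith

lemma smooth_approx_L1 (G : E → ℝ) (hG : Integrable G (volume : Measure E))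
    {ε : ℝ} (hε : 0 < ε) :
    ∃ φ : E → ℝ, ContDiff ℝ ((⊤ : ℕ∞) : WithTop ℕ∞) φ ∧ HasCompactSupport φ ∧
      ∫ x, |G x - φ x| ∂(volume : Measure E) ≤ ε := by
  obtain ⟨g, g_supp, hGg, g_cont, -⟩ :=
    (memLp_one_iff_integrable.2 hG).exists_hasCompactSupport_eLpNorm_sub_le
      (μ := (volume : Measure E)) one_ne_top
      (ε := ENNReal.ofReal (ε/2)) (ENNReal.ofReal_pos.2 (by positivity)).ne'
  -- the thickened support
  set K' : Set E := Metric.cthickening 1 (tsupport g) with hK'def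
  have hK' : IsCompact K' := g_supp.cthickening
  have hK'vol : (volume : Measure E) K' < ⊤ := hK'.measure_lt_top
  set t : ℝ := ((volume : Measure E) K').toReal with ht
  have ht0 : 0 ≤ t := ENNReal.toReal_nonneg
  set ε₂ : ℝ := (ε/2) / (t + 1) with hε₂def
  have hε₂ : 0 < ε₂ := by positivity
  -- uniform continuity
  obtain ⟨δ, hδpos, hδ⟩ := Metric.uniformContinuous_iff.1
    (g_supp.uniformContinuous_of_continuous g_cont) ε₂ hε₂
  set δ' : ℝ := min δ 1 with hδ'def
  have hδ'pos : 0 < δ' := lt_min hδpos one_pos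
  have hδ'le : δ' ≤ 1 := min_le_right _ _
  have hδ'δ : δ' ≤ δ := min_le_left _ _
  set b : ContDiffBump (0 : E) := ⟨δ'/2, δ', by positivity, by linarith⟩ with hbdef
  set φ : E → ℝ := (b.normed volume) ⋆[ContinuousLinearMap.lsmul ℝ ℝ, volume] g with hφdef
  have φ_smooth : ContDiff ℝ ((⊤ : ℕ∞) : WithTop ℕ∞) φ :=
    b.hasCompactSupport_normed.contDiff_convolution_left _ b.contDiff_normed
      g_cont.locallyIntegrable
  have φ_supp : HasCompactSupport φ :=
    b.hasCompactSupport_normed.convolution _ g_supp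
  have φ_cont : Continuous φ := φ_smooth.continuous
  -- pointwise estimate
  have hptw : ∀ x, |g x - φ x| ≤ ε₂ := by
    intro x
    have : dist (φ x) (g x) ≤ ε₂ := by
      apply ContDiffBump.dist_normed_convolution_le g_cont.aestronglyMeasurable
      intro y hy
      have : dist y x < δ := by
        have := Metric.mem_ball.1 hy
        calc dist y x < b.rOut := this
        _ = δ' := rfl
        _ ≤ δ := hδ'δ
      exact (hδ this).le
    rw [Real.dist_eq, abs_sub_comm] at this
    exact this
  -- support facts
  have hg_zero : ∀ x ∉ K', g x = 0 := by
    intro x hx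
    apply image_eq_zero_of_notMem_tsupport
    exact fun h => hx (Metric.self_subset_cthickening _ h)
  have hφ_zero : ∀ x ∉ K', φ x = 0 := by
    intro x hx
    by_contra h
    have hxsupp : x ∈ Function.support φ := h
    have := support_convolution_subset (μ := volume)
      (ContinuousLinearMap.lsmul ℝ ℝ) (f := b.normed volume) (g := g) hxsupp
    obtain ⟨a, ha, y, hy, rfl⟩ := this
    rw [b.support_normed_eq] at ha
    apply hx
    refine Metric.mem_cthickening_of_dist_le _ y 1 _ (subset_tsupport g hy) ?_
    have : dist (a + y) y = ‖a‖ := by simp [dist_eq_norm]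
    rw [this]
    have := Metric.mem_ball.1 ha
    simp only [dist_zero_right] at this
    linarith
  -- integrability
  have hgint : Integrable g (volume : Measure E) :=
    g_cont.integrable_of_hasCompactSupport g_supp
  have hφint : Integrable φ (volume : Measure E) :=
    φ_cont.integrable_of_hasCompactSupport φ_supp
  refine ⟨φ, φ_smooth, φ_supp, ?_⟩
  have h1 : ∫ x, |G x - g x| ∂(volume : Measure E) ≤ ε/2 := by
    have hmeq : ∫ x, |G x - g x| ∂(volume : Measure E)
        = (eLpNorm (G - g) 1 (volume : Measure E)).toReal := by
      rw [eLpNorm_one_eq_lintegral_enorm,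
        ← integral_norm_eq_lintegral_enorm (hG.sub hgint).aestronglyMeasurable]
      simp [Real.norm_eq_abs]
    rw [hmeq]
    refine ENNReal.toReal_le_of_le_ofReal (by positivity) ?_
    exact hGg.trans (le_refl _)
  have h2 : ∫ x, |g x - φ x| ∂(volume : Measure E) ≤ ε/2 := by
    have hind : ∀ x, |g x - φ x| ≤ K'.indicator (fun _ => ε₂) x := by
      intro x
      by_cases hx : x ∈ K'
      · rw [Set.indicator_of_mem hx]; exact hptw x
      · rw [Set.indicator_of_notMem hx, hg_zero x hx, hφ_zero x hx]; simp
    have hindint : Integrable (K'.indicator (fun _ => ε₂)) (volume : Measure E) := by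
      rw [integrable_indicator_iff hK'.measurableSet]
      exact integrableOn_const hK'vol.ne
    calc ∫ x, |g x - φ x| ∂(volume : Measure E)
        ≤ ∫ x, K'.indicator (fun _ => ε₂) x ∂(volume : Measure E) :=
          integral_mono (hgint.sub hφint).abs hindint hind
      _ = t * ε₂ := by
          rw [integral_indicator_const _ hK'.measurableSet]; simp [ht, smul_eq_mul, Measure.real]
      _ ≤ ε/2 := aux_arith ht0 (by positivity)
  calc ∫ x, |G x - φ x| ∂(volume : Measure E)
      ≤ ∫ x, (|G x - g x| + |g x - φ x|) ∂(volume : Measure E) := by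
        apply integral_mono (hG.sub hφint).abs ((hG.sub hgint).abs.add (hgint.sub hφint).abs)
        intro x
        simp only [Pi.sub_apply, Pi.add_apply]
        have h : G x - φ x = (G x - g x) + (g x - φ x) := by ring
        rw [h]
        exact abs_add_le _ _
    _ = ∫ x, |G x - g x| ∂(volume : Measure E) + ∫ x, |g x - φ x| ∂(volume : Measure E) :=
        integral_add (hG.sub hgint).abs (hgint.sub hφint).abs
    _ ≤ ε/2 + ε/2 := add_le_add h1 h2
    _ = ε := by ring

/-- Core analytic lemma: directional derivatives of the `uₙ` tested against a fixed `L¹`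
function tend to zero. -/
lemma core_tendsto (v : E)
    (u : ℕ → E → ℝ)
    (hu : ∀ n, ContDiff ℝ 1 (u n) ∧ HasCompactSupport (u n))
    (hunif : TendstoUniformly u 0 atTop)
    (L : ℝ≥0) (hL : ∀ n, LipschitzWith L (u n))
    (G : E → ℝ) (hG : Integrable G (volume : Measure E)) :
    Tendsto (fun n => ∫ x, fderiv ℝ (u n) x v * G x ∂(volume : Measure E)) atTop (𝓝 0) := by
  rw [NormedAddCommGroup.tendsto_nhds_zero]
  intro ε εpos
  set M : ℝ := (L : ℝ) * ‖v‖ with hMdef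
  have hM0 : 0 ≤ M := by positivity
  obtain ⟨φ, φ_smooth, φ_supp, hφ_close⟩ :=
    smooth_approx_L1 G hG (ε := ε / (4 * (M + 1))) (by positivity)
  have φ_cont : Continuous φ := φ_smooth.continuous
  have φ_int : Integrable φ (volume : Measure E) :=
    φ_cont.integrable_of_hasCompactSupport φ_supp
  -- derivative facts
  have hder_cont : ∀ n, Continuous fun x => fderiv ℝ (u n) x v := fun n =>
    ((hu n).1.continuous_fderiv one_ne_zero).clm_apply continuous_const
  have hder_bd : ∀ n x, |fderiv ℝ (u n) x v| ≤ M := by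
    intro n x
    calc |fderiv ℝ (u n) x v| = ‖fderiv ℝ (u n) x v‖ := rfl
      _ ≤ ‖fderiv ℝ (u n) x‖ * ‖v‖ := (fderiv ℝ (u n) x).le_opNorm v
      _ ≤ (L : ℝ) * ‖v‖ := by
          apply mul_le_mul_of_nonneg_right _ (norm_nonneg v)
          exact norm_fderiv_le_of_lipschitz ℝ (hL n)
  -- derivative of φ
  have hφder_cont : Continuous fun x => fderiv ℝ φ x v :=
    (φ_smooth.continuous_fderiv (by simp)).clm_apply continuous_const
  have hφder_supp : HasCompactSupport fun x => fderiv ℝ φ x v :=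
    φ_supp.fderiv_apply ℝ v
  have hφder_int : Integrable (fun x => |fderiv ℝ φ x v|) (volume : Measure E) :=
    (hφder_cont.integrable_of_hasCompactSupport hφder_supp).abs
  set C : ℝ := ∫ x, |fderiv ℝ φ x v| ∂(volume : Measure E) with hCdef
  have hC0 : 0 ≤ C := integral_nonneg fun x => abs_nonneg _
  -- uniform smallness of u n
  have hev := Metric.tendstoUniformly_iff.1 hunif (ε / (4 * (C + 1))) (by positivity)
  filter_upwards [hev] with n hn
  have hn' : ∀ x, |u n x| ≤ ε / (4 * (C + 1)) := by
    intro x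
    have := hn x
    rw [Real.dist_eq] at this
    simpa [abs_sub_comm] using this.le
  -- integrability of the pieces
  have hInt1 : Integrable (fun x => fderiv ℝ (u n) x v * (G x - φ x)) (volume : Measure E) :=
    (hG.sub φ_int).bdd_mul (hder_cont n).aestronglyMeasurable (Filter.Eventually.of_forall fun x => hder_bd n x)
  have hInt2 : Integrable (fun x => fderiv ℝ (u n) x v * φ x) (volume : Measure E) :=
    ((hder_cont n).mul φ_cont).integrable_of_hasCompactSupport φ_supp.mul_left
  have hsplit : ∫ x, fderiv ℝ (u n) x v * G x ∂(volume : Measure E)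
      = (∫ x, fderiv ℝ (u n) x v * (G x - φ x) ∂(volume : Measure E))
        + ∫ x, fderiv ℝ (u n) x v * φ x ∂(volume : Measure E) := by
    rw [← integral_add hInt1 hInt2]
    congr 1; funext x; ring
  -- term 1
  have hterm1 : ‖∫ x, fderiv ℝ (u n) x v * (G x - φ x) ∂(volume : Measure E)‖ ≤ ε/4 := by
    calc ‖∫ x, fderiv ℝ (u n) x v * (G x - φ x) ∂(volume : Measure E)‖
        ≤ ∫ x, ‖fderiv ℝ (u n) x v * (G x - φ x)‖ ∂(volume : Measure E) :=
          norm_integral_le_integral_norm _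
      _ ≤ ∫ x, M * |G x - φ x| ∂(volume : Measure E) := by
          apply integral_mono hInt1.norm ((hG.sub φ_int).abs.const_mul M)
          intro x
          simp only [Pi.sub_apply]
          show ‖fderiv ℝ (u n) x v * (G x - φ x)‖ ≤ M * |G x - φ x|
          rw [Real.norm_eq_abs, abs_mul]
          exact mul_le_mul_of_nonneg_right (hder_bd n x) (abs_nonneg _)
      _ = M * ∫ x, |G x - φ x| ∂(volume : Measure E) := integral_const_mul _ _
      _ ≤ M * (ε / (4 * (M + 1))) :=
          mul_le_mul_of_nonneg_left hφ_close hM0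
      _ = M * ((ε/4) / (M + 1)) := by rw [div_div]
      _ ≤ ε/4 := aux_arith hM0 (by positivity)
  -- term 2 via integration by parts
  have hIbp : ∫ x, fderiv ℝ (u n) x v * φ x ∂(volume : Measure E)
      = - ∫ x, fderiv ℝ φ x v * u n x ∂(volume : Measure E) := by
    have h1 : ∫ x, fderiv ℝ (u n) x v * φ x ∂(volume : Measure E)
        = ∫ x, φ x * fderiv ℝ (u n) x v ∂(volume : Measure E) := by
      congr 1; funext x; ring
    rw [h1]
    apply integral_mul_fderiv_eq_neg_fderiv_mul_of_integrable
    · exact (hφder_cont.mul (hu n).1.continuous).integrable_of_hasCompactSupport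
        (hu n).2.mul_left
    · exact (φ_cont.mul (hder_cont n)).integrable_of_hasCompactSupport φ_supp.mul_right
    · exact (φ_cont.mul (hu n).1.continuous).integrable_of_hasCompactSupport φ_supp.mul_right
    · exact fun x _ => φ_smooth.differentiable (by simp) x
    · exact fun x _ => (hu n).1.differentiable one_ne_zero x
  have hterm2 : ‖∫ x, fderiv ℝ (u n) x v * φ x ∂(volume : Measure E)‖ ≤ ε/4 := by
    rw [hIbp, norm_neg]
    calc ‖∫ x, fderiv ℝ φ x v * u n x ∂(volume : Measure E)‖
        ≤ ∫ x, ‖fderiv ℝ φ x v * u n x‖ ∂(volume : Measure E) :=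
          norm_integral_le_integral_norm _
      _ ≤ ∫ x, |fderiv ℝ φ x v| * (ε / (4 * (C + 1))) ∂(volume : Measure E) := by
          apply integral_mono
            ((hφder_cont.mul (hu n).1.continuous).integrable_of_hasCompactSupport
              (hu n).2.mul_left).norm
            (hφder_int.mul_const _)
          intro x
          show ‖fderiv ℝ φ x v * u n x‖ ≤ |fderiv ℝ φ x v| * (ε / (4 * (C + 1)))
          rw [Real.norm_eq_abs, abs_mul]
          exact mul_le_mul_of_nonneg_left (hn' x) (abs_nonneg _)
      _ = C * (ε / (4 * (C + 1))) := integral_mul_const _ _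
      _ = C * ((ε/4) / (C + 1)) := by rw [div_div]
      _ ≤ ε/4 := aux_arith hC0 (by positivity)
  calc ‖∫ x, fderiv ℝ (u n) x v * G x ∂(volume : Measure E)‖
      ≤ ‖∫ x, fderiv ℝ (u n) x v * (G x - φ x) ∂(volume : Measure E)‖
        + ‖∫ x, fderiv ℝ (u n) x v * φ x ∂(volume : Measure E)‖ := by
        rw [hsplit]; exact norm_add_le _ _
    _ ≤ ε/4 + ε/4 := add_le_add hterm1 hterm2
    _ < ε := by linarith

end Aux

/-- **Closability of the gradient from Lip to Lᵖ_w(μ) for μ ≪ Lebesgue, 1 ≤ p < ∞.**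
If `μ ≪ 𝓛^d`, `uₙ ∈ C¹_c(ℝ^d)`, `uₙ → 0` uniformly with uniformly bounded Lipschitz
constants, and `∇uₙ → w` weakly in `Lᵖ(μ; ℝ^d)` (tested against all `φ ∈ L^{p'}(μ; ℝ^d)`,
`p'` the Hölder conjugate of `p`), then `w = 0` μ-a.e. -/
theorem stmt1 (d : ℕ) (hd : 1 ≤ d)
    (μ : Measure (EuclideanSpace ℝ (Fin d))) [IsLocallyFiniteMeasure μ]
    (hμ : μ ≪ volume)
    (p p' : ℝ≥0∞) (hp : 1 ≤ p) (hptop : p ≠ ∞) (hpp' : p⁻¹ + p'⁻¹ = 1)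
    (u : ℕ → EuclideanSpace ℝ (Fin d) → ℝ)
    (hu : ∀ n, ContDiff ℝ 1 (u n) ∧ HasCompactSupport (u n))
    (hunif : TendstoUniformly u 0 atTop)
    (L : ℝ≥0) (hL : ∀ n, LipschitzWith L (u n))
    (w : EuclideanSpace ℝ (Fin d) → EuclideanSpace ℝ (Fin d))
    (hw : MemLp w p μ)
    (hweak : ∀ φ : EuclideanSpace ℝ (Fin d) → EuclideanSpace ℝ (Fin d),
      MemLp φ p' μ →
      Tendsto (fun n => ∫ x, ⟪gradient (u n) x, φ x⟫ ∂μ) atTop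
        (𝓝 (∫ x, ⟪w x, φ x⟫ ∂μ))) :
    ∀ᵐ x ∂μ, w x = 0 := by
  have hgrad : ∀ (f : EuclideanSpace ℝ (Fin d) → ℝ) x (v : EuclideanSpace ℝ (Fin d)),
      ⟪gradient f x, v⟫ = fderiv ℝ f x v := by
    intro f x v
    rw [gradient, ← InnerProductSpace.toDual_apply_apply, LinearIsometryEquiv.apply_symm_apply]
  have hwli : LocallyIntegrable w μ := hw.locallyIntegrable hp
  have key : ∀ g : EuclideanSpace ℝ (Fin d) → ℝ, ContDiff ℝ ((⊤ : ℕ∞) : WithTop ℕ∞) g → HasCompactSupport g →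
      ∫ x, g x • w x ∂μ = 0 := by
    intro g hg hgsupp
    have hv : ∀ v : EuclideanSpace ℝ (Fin d), ∫ x, g x * ⟪w x, v⟫ ∂μ = 0 := by
      intro v
      have hφmem : MemLp (fun x => g x • v) p' μ :=
        (hg.continuous.smul continuous_const).memLp_of_hasCompactSupport hgsupp.smul_right
      have h1 := hweak _ hφmem
      have hGint_mu : Integrable g μ := hg.continuous.integrable_of_hasCompactSupport hgsupp
      have hGint : Integrable (fun x => (μ.rnDeriv volume x).toReal • g x) volume :=
        (integrable_rnDeriv_smul_iff hμ).2 hGint_mu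
      have h2 := core_tendsto v u hu hunif L hL _ hGint
      have heq : ∀ n, ∫ x, ⟪gradient (u n) x, g x • v⟫ ∂μ
          = ∫ x, fderiv ℝ (u n) x v * ((μ.rnDeriv volume x).toReal • g x) ∂volume := by
        intro n
        rw [← integral_rnDeriv_smul hμ
          (f := fun x => (inner ℝ (gradient (u n) x) (g x • v) : ℝ))]
        congr 1; funext x
        rw [real_inner_smul_right, hgrad]
        simp only [smul_eq_mul]; ring
      simp only [heq] at h1
      have h0 : ∫ x, ⟪w x, g x • v⟫ ∂μ = 0 := tendsto_nhds_unique h1 h2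
      rw [← h0]
      congr 1; funext x
      rw [real_inner_smul_right]
    have hint : Integrable (fun x => g x • w x) μ :=
      hwli.integrable_smul_left_of_hasCompactSupport hg.continuous hgsupp
    have hinner : ∀ v : EuclideanSpace ℝ (Fin d), ⟪v, ∫ x, g x • w x ∂μ⟫ = 0 := by
      intro v
      rw [← integral_inner hint v]
      rw [← hv v]
      congr 1; funext x
      rw [real_inner_smul_right, real_inner_comm]
    have := hinner (∫ x, g x • w x ∂μ)
    exact inner_self_eq_zero.1 this
  exact ae_eq_zero_of_integral_contDiff_smul_eq_zero hwli key
end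

section
/- Let d ≥ 1 and let μ be a Radon measure on ℝ^d that is absolutely continuous with respect to the Lebesgue measure 𝓛^d. If (u_n) is a sequence in C¹_c(ℝ^d) such that u_n → 0 uniformly, the Lipschitz constants Lip(u_n) are uniformly bounded, and there is w ∈ L^∞(μ; ℝ^d) such that ∫ ⟨∇u_n, φ⟩ dμ → ∫ ⟨w, φ⟩ dμ for every φ ∈ L^1(μ; ℝ^d) (i.e. ∇u_n → w weakly* in L^∞(μ; ℝ^d)), then w = 0 μ-almost everywhere. (This is closability of the gradient from Lip(ℝ^d) to L^∞_w(μ).) -/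
open MeasureTheory Filter Topology ENNReal NNReal RealInnerProductSpace
open scoped Convolution Pointwise

variable {d : ℕ}


lemma smooth_approx (g : EuclideanSpace ℝ (Fin d) → EuclideanSpace ℝ (Fin d))
    (hg : Integrable g volume) {ε : ℝ} (hε : 0 < ε) :
    ∃ ψ : EuclideanSpace ℝ (Fin d) → EuclideanSpace ℝ (Fin d), ContDiff ℝ 1 ψ ∧
      HasCompactSupport ψ ∧ Integrable ψ volume ∧ ∫ x, ‖g x - ψ x‖ ≤ ε := by
  obtain ⟨h, hhc, hint, hcont, hhint⟩ :=
    hg.exists_hasCompactSupport_integral_sub_le (half_pos hε)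
  set K : Set (EuclideanSpace ℝ (Fin d)) := Metric.closedBall (0 : EuclideanSpace ℝ (Fin d)) 1 + tsupport h with hKdef
  have hK : IsCompact K := (isCompact_closedBall (0 : EuclideanSpace ℝ (Fin d)) 1).add hhc
  have hKvol : volume K < ∞ := hK.measure_lt_top
  set V : ℝ := (volume K).toReal + 1 with hVdef
  have hV : 0 < V := by positivity
  have huc : UniformContinuous h := hhc.uniformContinuous_of_continuous hcont
  obtain ⟨r, hr0, hr⟩ := Metric.uniformContinuous_iff.1 huc (ε / (2 * V)) (by positivity)
  set r' : ℝ := min r 1 with hr'def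
  have hr'0 : 0 < r' := lt_min hr0 one_pos
  set φ : ContDiffBump (0 : EuclideanSpace ℝ (Fin d)) := ⟨r' / 2, r', by positivity, by linarith⟩
    with hφdef
  set ψ : EuclideanSpace ℝ (Fin d) → EuclideanSpace ℝ (Fin d) :=
    φ.normed volume ⋆[ContinuousLinearMap.lsmul ℝ ℝ, volume] h with hψdef
  have hψsm : ContDiff ℝ 1 ψ :=
    φ.hasCompactSupport_normed.contDiff_convolution_left _ φ.contDiff_normed
      hcont.locallyIntegrable
  have hψc : HasCompactSupport ψ := φ.hasCompactSupport_normed.convolution _ hhc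
  have hψcont : Continuous ψ := hψsm.continuous
  have hψint : Integrable ψ volume := hψcont.integrable_of_hasCompactSupport hψc
  -- pointwise bound
  have hbd : ∀ x, dist (ψ x) (h x) ≤ ε / (2 * V) := by
    intro x
    refine ContDiffBump.dist_normed_convolution_le hcont.aestronglyMeasurable ?_
    intro y hy
    have : dist y x < r := by
      have := Metric.mem_ball.1 hy
      calc dist y x < r' := this
        _ ≤ r := min_le_left _ _
    exact (hr this).le
  -- supports inside K
  have hsup_h : tsupport h ⊆ K := by
    intro x hx
    have : (0 : EuclideanSpace ℝ (Fin d)) + x ∈ K :=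
      Set.add_mem_add (Metric.mem_closedBall_self zero_le_one) hx
    simpa using this
  have hsup_ψ : tsupport ψ ⊆ K := by
    have h1 : Function.support ψ ⊆ Function.support (φ.normed volume) + Function.support h :=
      support_convolution_subset _
    have h2 : Function.support (φ.normed volume) + Function.support h ⊆ K := by
      rw [φ.support_normed_eq]
      apply Set.add_subset_add _ subset_closure
      intro z hz
      have : ‖z‖ < r' := by simpa [Metric.mem_ball] using hz
      exact Metric.mem_closedBall.2 (by simp only [dist_zero_right]; linarith [min_le_right r 1])
    exact (closure_minimal (h1.trans h2) hK.isClosed)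
  -- ∫ ‖h - ψ‖ ≤ ε/2
  have hmeas : volume K ≠ ∞ := hKvol.ne
  have hzero : ∀ x ∉ K, ‖h x - ψ x‖ = 0 := by
    intro x hx
    rw [image_eq_zero_of_notMem_tsupport (fun hh => hx (hsup_h hh)),
      image_eq_zero_of_notMem_tsupport (fun hh => hx (hsup_ψ hh)), sub_zero, norm_zero]
  have hint2 : ∫ x, ‖h x - ψ x‖ ≤ ε / 2 := by
    have : ∫ x, ‖h x - ψ x‖ = ∫ x in K, ‖h x - ψ x‖ :=
      (setIntegral_eq_integral_of_forall_compl_eq_zero hzero).symm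
    rw [this]
    calc ∫ x in K, ‖h x - ψ x‖
        = ‖∫ x in K, ‖h x - ψ x‖‖ :=
          (Real.norm_of_nonneg (integral_nonneg fun x => norm_nonneg _)).symm
      _ ≤ (ε / (2 * V)) * (volume K).toReal := by
          apply norm_setIntegral_le_of_norm_le_const hKvol ?_
          · intro x _
            rw [norm_norm, ← dist_eq_norm, dist_comm]
            exact hbd x
      _ ≤ (ε / (2 * V)) * V := by
          apply mul_le_mul_of_nonneg_left _ (by positivity)
          rw [hVdef]; linarith
      _ = ε / 2 := by field_simp
  refine ⟨ψ, hψsm, hψc, hψint, ?_⟩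
  calc ∫ x, ‖g x - ψ x‖ ≤ ∫ x, (‖g x - h x‖ + ‖h x - ψ x‖) := by
        apply integral_mono ?_ ?_ ?_
        · exact (hg.sub hψint).norm
        · exact (hg.sub hhint).norm.add (hhint.sub hψint).norm
        · intro x
          simpa [dist_eq_norm] using dist_triangle (g x) (h x) (ψ x)
    _ = (∫ x, ‖g x - h x‖) + ∫ x, ‖h x - ψ x‖ :=
        integral_add (hg.sub hhint).norm (hhint.sub hψint).norm
    _ ≤ ε / 2 + ε / 2 := add_le_add hint hint2
    _ = ε := by ring

lemma grad_inner (f : EuclideanSpace ℝ (Fin d) → ℝ) (x y : EuclideanSpace ℝ (Fin d)) :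
    ⟪gradient f x, y⟫ = fderiv ℝ f x y :=
  InnerProductSpace.toDual_symm_apply

lemma ibp_tendsto (u : ℕ → EuclideanSpace ℝ (Fin d) → ℝ)
    (hu : ∀ n, ContDiff ℝ 1 (u n) ∧ HasCompactSupport (u n))
    (hunif : TendstoUniformly u 0 atTop)
    (ψ : EuclideanSpace ℝ (Fin d) → EuclideanSpace ℝ (Fin d))
    (hψ : ContDiff ℝ 1 ψ) (hψc : HasCompactSupport ψ) :
    Tendsto (fun n => ∫ x, ⟪gradient (u n) x, ψ x⟫) atTop (𝓝 0) := by
  have hun_sm : ∀ n, ContDiff ℝ 1 (u n) := fun n => (hu n).1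
  set b := EuclideanSpace.basisFun (Fin d) ℝ with hb
  set ψi : Fin d → EuclideanSpace ℝ (Fin d) → ℝ := fun i x => ⟪(b : _) i, ψ x⟫ with hψidef
  have hψi_sm : ∀ i, ContDiff ℝ 1 (ψi i) := fun i => contDiff_const.inner ℝ hψ
  have hψi_c : ∀ i, HasCompactSupport (ψi i) := by
    intro i
    apply hψc.comp_left (g := fun v => ⟪(b : _) i, v⟫)
    simp
  have hψi_cont : ∀ i, Continuous (ψi i) := fun i => (hψi_sm i).continuous
  have hDψ_cont : ∀ i, Continuous fun x => fderiv ℝ (ψi i) x ((b : _) i) :=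
    fun i => ((hψi_sm i).continuous_fderiv one_ne_zero).clm_apply continuous_const
  have hDψ_c : ∀ i, HasCompactSupport fun x => fderiv ℝ (ψi i) x ((b : _) i) :=
    fun i => (hψi_c i).fderiv_apply ℝ ((b : _) i)
  have hDu_cont : ∀ n i, Continuous fun x => fderiv ℝ (u n) x ((b : _) i) :=
    fun n i => ((hun_sm n).continuous_fderiv one_ne_zero).clm_apply continuous_const
  have int1 : ∀ n i, Integrable (fun x => ψi i x * fderiv ℝ (u n) x ((b : _) i)) volume :=
    fun n i => ((hψi_cont i).mul (hDu_cont n i)).integrable_of_hasCompactSupport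
      ((hψi_c i).mul_right)
  have int2 : ∀ n i, Integrable (fun x => fderiv ℝ (ψi i) x ((b : _) i) * u n x) volume :=
    fun n i => ((hDψ_cont i).mul (hun_sm n).continuous).integrable_of_hasCompactSupport
      ((hDψ_c i).mul_right)
  have int3 : ∀ n i, Integrable (fun x => ψi i x * u n x) volume :=
    fun n i => ((hψi_cont i).mul (hun_sm n).continuous).integrable_of_hasCompactSupport
      ((hψi_c i).mul_right)
  have step : ∀ n, ∫ x, ⟪gradient (u n) x, ψ x⟫ =
      ∑ i, -(∫ x, fderiv ℝ (ψi i) x ((b : _) i) * u n x) := by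
    intro n
    have h1 : (fun x => ⟪gradient (u n) x, ψ x⟫)
        = fun x => ∑ i, ψi i x * fderiv ℝ (u n) x ((b : _) i) := by
      funext x
      rw [← (EuclideanSpace.basisFun (Fin d) ℝ).sum_inner_mul_inner (gradient (u n) x) (ψ x)]
      refine Finset.sum_congr rfl fun i _ => ?_
      rw [grad_inner]
      exact mul_comm _ _
    rw [h1, integral_finset_sum _ (fun i _ => int1 n i)]
    refine Finset.sum_congr rfl fun i _ => ?_
    exact integral_mul_fderiv_eq_neg_fderiv_mul_of_integrable (int2 n i) (int1 n i) (int3 n i)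
      (fun x _ => (hψi_sm i).differentiable one_ne_zero x) (fun x _ => (hun_sm n).differentiable one_ne_zero x)
  have key : ∀ i, Tendsto (fun n => ∫ x, fderiv ℝ (ψi i) x ((b : _) i) * u n x) atTop (𝓝 0) := by
    intro i
    rw [NormedAddCommGroup.tendsto_nhds_zero]
    intro ε hε
    set C : ℝ := ∫ x, ‖fderiv ℝ (ψi i) x ((b : _) i)‖ with hCdef
    have hC0 : 0 ≤ C := integral_nonneg fun x => norm_nonneg _
    have hCi : Integrable (fun x => ‖fderiv ℝ (ψi i) x ((b : _) i)‖) volume :=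
      ((hDψ_cont i).integrable_of_hasCompactSupport (hDψ_c i)).norm
    have hδ : (0:ℝ) < ε / (2 * (C + 1)) := by positivity
    filter_upwards [Metric.tendstoUniformly_iff.1 hunif _ hδ] with n hn
    have hbd : ∀ x, ‖u n x‖ ≤ ε / (2 * (C + 1)) := by
      intro x
      have h2 := hn x
      simp only [Pi.zero_apply, Real.dist_eq, zero_sub, abs_neg] at h2
      simpa [Real.norm_eq_abs] using h2.le
    calc ‖∫ x, fderiv ℝ (ψi i) x ((b : _) i) * u n x‖
        ≤ ∫ x, ‖fderiv ℝ (ψi i) x ((b : _) i) * u n x‖ := norm_integral_le_integral_norm _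
      _ ≤ ∫ x, ‖fderiv ℝ (ψi i) x ((b : _) i)‖ * (ε / (2 * (C + 1))) := by
          refine integral_mono (int2 _ i).norm (hCi.mul_const _) fun x => ?_
          rw [norm_mul]
          exact mul_le_mul_of_nonneg_left (hbd x) (norm_nonneg _)
      _ = C * (ε / (2 * (C + 1))) := by
          rw [integral_mul_const]
      _ < ε := by
          rw [mul_div_assoc', div_lt_iff₀ (by positivity)]
          nlinarith
  have sum0 : Tendsto (fun n => ∑ i : Fin d,
      -(∫ x, fderiv ℝ (ψi i) x ((b : _) i) * u n x)) atTop (𝓝 0) := by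
    have := tendsto_finset_sum (Finset.univ : Finset (Fin d)) (fun i _ => (key i).neg)
    simpa using this
  exact sum0.congr fun n => (step n).symm

lemma grad_cont {f : EuclideanSpace ℝ (Fin d) → ℝ} (hf : ContDiff ℝ 1 f) :
    Continuous (gradient f) :=
  (InnerProductSpace.toDual ℝ _).symm.continuous.comp (hf.continuous_fderiv one_ne_zero)

lemma grad_norm_le {f : EuclideanSpace ℝ (Fin d) → ℝ} {L : ℝ≥0} (hf : LipschitzWith L f)
    (x : EuclideanSpace ℝ (Fin d)) : ‖gradient f x‖ ≤ L := by
  rw [show ‖gradient f x‖ = ‖fderiv ℝ f x‖ from LinearIsometryEquiv.norm_map _ _]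
  exact norm_fderiv_le_of_lipschitz ℝ hf

lemma inner_grad_integrable {f : EuclideanSpace ℝ (Fin d) → ℝ} {L : ℝ≥0}
    (hf : ContDiff ℝ 1 f) (hfl : LipschitzWith L f)
    {g : EuclideanSpace ℝ (Fin d) → EuclideanSpace ℝ (Fin d)}
    {ν : Measure (EuclideanSpace ℝ (Fin d))} (hg : Integrable g ν) :
    Integrable (fun x => ⟪gradient f x, g x⟫) ν := by
  refine (hg.norm.const_mul (L : ℝ)).mono' ?_ ?_
  · exact (grad_cont hf).aestronglyMeasurable.inner hg.aestronglyMeasurable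
  · refine Eventually.of_forall fun x => ?_
    refine le_trans (abs_real_inner_le_norm _ _) ?_
    exact mul_le_mul_of_nonneg_right (grad_norm_le hfl x) (norm_nonneg _)

lemma claim2 (u : ℕ → EuclideanSpace ℝ (Fin d) → ℝ)
    (hu : ∀ n, ContDiff ℝ 1 (u n) ∧ HasCompactSupport (u n))
    (hunif : TendstoUniformly u 0 atTop)
    (L : ℝ≥0) (hL : ∀ n, LipschitzWith L (u n))
    (g : EuclideanSpace ℝ (Fin d) → EuclideanSpace ℝ (Fin d)) (hg : Integrable g volume) :
    Tendsto (fun n => ∫ x, ⟪gradient (u n) x, g x⟫) atTop (𝓝 0) := by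
  rw [NormedAddCommGroup.tendsto_nhds_zero]
  intro ε hε
  obtain ⟨ψ, hψsm, hψc, hψint, hψap⟩ :=
    smooth_approx g hg (ε := ε / (2 * (L + 1))) (by positivity)
  have h2 := NormedAddCommGroup.tendsto_nhds_zero.1 (ibp_tendsto u hu hunif ψ hψsm hψc)
    (ε / 2) (by positivity)
  filter_upwards [h2] with n hn
  have i1 : Integrable (fun x => ⟪gradient (u n) x, g x⟫) volume :=
    inner_grad_integrable (hu n).1 (hL n) hg
  have i2 : Integrable (fun x => ⟪gradient (u n) x, ψ x⟫) volume :=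
    inner_grad_integrable (hu n).1 (hL n) hψint
  have split : ∫ x, ⟪gradient (u n) x, g x⟫
      = (∫ x, ⟪gradient (u n) x, g x - ψ x⟫) + ∫ x, ⟪gradient (u n) x, ψ x⟫ := by
    rw [← integral_add (by simp only [inner_sub_right]; exact i1.sub i2) i2]
    congr 1
    funext x
    rw [inner_sub_right]
    ring
  have hfirst : ‖∫ x, ⟪gradient (u n) x, g x - ψ x⟫‖ ≤ (L : ℝ) * (ε / (2 * (L + 1))) := by
    calc ‖∫ x, ⟪gradient (u n) x, g x - ψ x⟫‖
        ≤ ∫ x, ‖⟪gradient (u n) x, g x - ψ x⟫‖ := norm_integral_le_integral_norm _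
      _ ≤ ∫ x, (L : ℝ) * ‖g x - ψ x‖ := by
          refine integral_mono (by simp only [inner_sub_right]; exact (i1.sub i2).norm)
            ((hg.sub hψint).norm.const_mul _) fun x => ?_
          refine le_trans (abs_real_inner_le_norm _ _) ?_
          exact mul_le_mul_of_nonneg_right (grad_norm_le (hL n) x) (norm_nonneg _)
      _ = (L : ℝ) * ∫ x, ‖g x - ψ x‖ := integral_const_mul _ _
      _ ≤ (L : ℝ) * (ε / (2 * (L + 1))) :=
          mul_le_mul_of_nonneg_left hψap (NNReal.coe_nonneg L)
  have hL2 : (L : ℝ) * (ε / (2 * (L + 1))) < ε / 2 := by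
    rw [mul_div_assoc', div_lt_iff₀ (by positivity)]
    have : (0:ℝ) ≤ L := NNReal.coe_nonneg L
    nlinarith
  calc ‖∫ x, ⟪gradient (u n) x, g x⟫‖
      ≤ ‖∫ x, ⟪gradient (u n) x, g x - ψ x⟫‖ + ‖∫ x, ⟪gradient (u n) x, ψ x⟫‖ := by
        rw [split]; exact norm_add_le _ _
    _ < ε / 2 + ε / 2 := add_lt_add_of_lt_of_le (lt_of_le_of_lt hfirst hL2) hn.le |>.trans_le le_rfl
    _ = ε := by ring

/-- **Closability of the gradient from Lip to L^∞_w(μ) for μ ≪ Lebesgue.**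
If `μ ≪ 𝓛^d`, `uₙ ∈ C¹_c(ℝ^d)`, `uₙ → 0` uniformly with uniformly bounded Lipschitz
constants, and `∇uₙ → w` weakly* in `L^∞(μ; ℝ^d)` (tested against all `φ ∈ L¹(μ; ℝ^d)`),
then `w = 0` μ-a.e. -/
theorem stmt2 (d : ℕ) (hd : 1 ≤ d)
    (μ : Measure (EuclideanSpace ℝ (Fin d))) [IsLocallyFiniteMeasure μ]
    (hμ : μ ≪ volume)
    (u : ℕ → EuclideanSpace ℝ (Fin d) → ℝ)
    (hu : ∀ n, ContDiff ℝ 1 (u n) ∧ HasCompactSupport (u n))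
    (hunif : TendstoUniformly u 0 atTop)
    (L : ℝ≥0) (hL : ∀ n, LipschitzWith L (u n))
    (w : EuclideanSpace ℝ (Fin d) → EuclideanSpace ℝ (Fin d))
    (hw : MemLp w ∞ μ)
    (hweak : ∀ φ : EuclideanSpace ℝ (Fin d) → EuclideanSpace ℝ (Fin d),
      Integrable φ μ →
      Tendsto (fun n => ∫ x, ⟪gradient (u n) x, φ x⟫ ∂μ) atTop
        (𝓝 (∫ x, ⟪w x, φ x⟫ ∂μ))) :
    ∀ᵐ x ∂μ, w x = 0 := by
  -- densities
  set ρ : EuclideanSpace ℝ (Fin d) → ℝ≥0 := fun x => (μ.rnDeriv volume x).toNNReal with hρdef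
  have hρm : Measurable ρ := (Measure.measurable_rnDeriv μ volume).ennreal_toNNReal
  have hρfin : ∀ᵐ x ∂volume, μ.rnDeriv volume x < ∞ := Measure.rnDeriv_lt_top μ volume
  have hμeq : volume.withDensity (fun x => (ρ x : ℝ≥0∞)) = μ := by
    rw [withDensity_congr_ae (coe_toNNReal_ae_eq hρfin)]
    exact Measure.withDensity_rnDeriv_eq μ volume hμ
  -- Claim 1 : all pairings with w vanish
  have claim1 : ∀ φ : EuclideanSpace ℝ (Fin d) → EuclideanSpace ℝ (Fin d),
      Integrable φ μ → ∫ x, ⟪w x, φ x⟫ ∂μ = 0 := by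
    intro φ hφ
    have hφ' : Integrable φ (volume.withDensity (fun x => (ρ x : ℝ≥0∞))) := by
      rwa [hμeq]
    have hg : Integrable (fun x => ρ x • φ x) volume :=
      (integrable_withDensity_iff_integrable_smul hρm).1 hφ'
    have heq : ∀ n, ∫ x, ⟪gradient (u n) x, φ x⟫ ∂μ
        = ∫ x, ⟪gradient (u n) x, ρ x • φ x⟫ := by
      intro n
      rw [← hμeq, integral_withDensity_eq_integral_smul hρm]
      congr 1
      funext x
      rw [inner_smul_right_eq_smul]
    have lim2 : Tendsto (fun n => ∫ x, ⟪gradient (u n) x, φ x⟫ ∂μ) atTop (𝓝 0) := by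
      have := claim2 u hu hunif L hL (fun x => ρ x • φ x) hg
      exact Tendsto.congr (fun n => (heq n).symm) this
    exact tendsto_nhds_unique (hweak φ hφ) lim2
  -- From claim1, deduce w = 0 a.e.
  obtain ⟨C, hC⟩ : ∃ C : ℝ, ∀ᵐ x ∂μ, ‖w x‖ ≤ C := by
    refine ⟨(eLpNormEssSup w μ).toReal, ?_⟩
    filter_upwards [ae_le_eLpNormEssSup (f := w) (μ := μ)] with x hx
    have hfin : eLpNormEssSup w μ ≠ ∞ := by
      have := hw.2
      rw [eLpNorm_exponent_top] at this
      exact this.ne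
    calc ‖w x‖ = ((‖w x‖₊ : ℝ≥0∞)).toReal := by simp
      _ ≤ (eLpNormEssSup w μ).toReal := ENNReal.toReal_mono hfin hx
  have hwm : AEStronglyMeasurable w μ := hw.1
  set S : ℕ → Set (EuclideanSpace ℝ (Fin d)) := spanningSets μ with hSdef
  have hwS : ∀ k, ∀ᵐ x ∂μ, x ∈ S k → w x = 0 := by
    intro k
    have hSm : MeasurableSet (S k) := measurableSet_spanningSets μ k
    have hSfin : μ (S k) < ∞ := measure_spanningSets_lt_top μ k
    have hφint : Integrable ((S k).indicator w) μ := by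
      rw [integrable_indicator_iff hSm]
      refine Integrable.mono' (g := fun _ => C) ?_ (hwm.restrict) ?_
      · exact integrableOn_const hSfin.ne
      · exact ae_restrict_of_ae hC
    have h0 := claim1 _ hφint
    have hnn : 0 ≤ᵐ[μ] fun x => ⟪w x, (S k).indicator w x⟫ := by
      refine Eventually.of_forall fun x => ?_
      by_cases hx : x ∈ S k
      · simp only [Set.indicator_of_mem hx]
        exact real_inner_self_nonneg
      · simp [Set.indicator_of_notMem hx]
    have hi : Integrable (fun x => ⟪w x, (S k).indicator w x⟫) μ := by
      refine (hφint.norm.const_mul C).mono'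
        (hwm.inner hφint.aestronglyMeasurable) ?_
      filter_upwards [hC] with x hx
      refine le_trans (abs_real_inner_le_norm _ _) ?_
      exact mul_le_mul_of_nonneg_right hx (norm_nonneg _)
    have := (integral_eq_zero_iff_of_nonneg_ae hnn hi).1 h0
    filter_upwards [this] with x hx hxS
    have : ⟪w x, w x⟫ = 0 := by
      have := hx
      simp only [Set.indicator_of_mem hxS] at this
      exact this
    exact inner_self_eq_zero.1 this
  have hall : ∀ᵐ x ∂μ, ∀ k, x ∈ S k → w x = 0 := ae_all_iff.2 hwS
  filter_upwards [hall] with x hx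
  obtain ⟨k, hk⟩ : ∃ k, x ∈ S k := by
    have := iUnion_spanningSets μ
    have hx' : x ∈ ⋃ k, S k := by rw [hSdef, this]; trivial
    exact Set.mem_iUnion.1 hx'
  exact hx k hk
end

section
/- Let K ⊂ ℝ be a compact, totally disconnected set with positive Lebesgue measure, and let μ be the restriction of the Lebesgue measure 𝓛^1 to K. Then for every 1 ≤ p, q ≤ ∞ the derivative operator u ↦ u' on C¹_c(ℝ) is not closable from L^q(μ) to L^p(μ): there exist a sequence (u_n) in C¹_c(ℝ) and w ∈ L^p(μ) with w ≠ 0 on a set of positive μ-measure, such that u_n → 0 in L^q(μ) and u_n' → w in L^p(μ). -/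
open MeasureTheory Filter Topology ENNReal NNReal

private lemma card_le_two_aux (S : Finset ℕ)
    (h : ∀ i ∈ S, ∀ j ∈ S, i < j → j ≤ i + 1) : S.card ≤ 2 := by
  rcases S.eq_empty_or_nonempty with rfl | hS
  · simp
  · have hsub : S ⊆ Finset.Icc (S.min' hS) (S.min' hS + 1) := by
      intro j hj
      rw [Finset.mem_Icc]
      refine ⟨S.min'_le j hj, ?_⟩
      rcases eq_or_lt_of_le (S.min'_le j hj) with heq | hlt
      · omega
      · exact h _ (S.min'_mem hS) _ hj hlt
    calc S.card ≤ (Finset.Icc (S.min' hS) (S.min' hS + 1)).card := Finset.card_le_card hsub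
      _ = 2 := by rw [Nat.card_Icc]; omega

noncomputable def etaf (a b : ℝ) : ℝ → ℝ := fun x =>
  Real.smoothTransition (4*(x-a)+2) * Real.smoothTransition (4*(b-x)+3)

lemma etaf_nonneg (a b x : ℝ) : 0 ≤ etaf a b x :=
  mul_nonneg (Real.smoothTransition.nonneg _) (Real.smoothTransition.nonneg _)

lemma etaf_le_one (a b x : ℝ) : etaf a b x ≤ 1 :=
  mul_le_one₀ (Real.smoothTransition.le_one _) (Real.smoothTransition.nonneg _)
    (Real.smoothTransition.le_one _)

lemma etaf_eq_one (a b x : ℝ) (h1 : a ≤ x) (h2 : x ≤ b) : etaf a b x = 1 := by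
  unfold etaf
  rw [Real.smoothTransition.one_of_one_le (by linarith),
    Real.smoothTransition.one_of_one_le (by linarith), mul_one]

lemma etaf_eq_zero_left (a b x : ℝ) (h : x ≤ a - 1/2) : etaf a b x = 0 := by
  unfold etaf
  rw [Real.smoothTransition.zero_of_nonpos (by linarith), zero_mul]

lemma etaf_eq_zero_right (a b x : ℝ) (h : b + 3/4 ≤ x) : etaf a b x = 0 := by
  unfold etaf
  rw [Real.smoothTransition.zero_of_nonpos (x := 4*(b-x)+3) (by linarith), mul_zero]

lemma etaf_continuous (a b : ℝ) : Continuous (etaf a b) := by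
  unfold etaf
  exact (Real.smoothTransition.continuous.comp (by continuity)).mul
    (Real.smoothTransition.continuous.comp (by continuity))

lemma etaf_intble (a b c d : ℝ) : IntervalIntegrable (etaf a b) volume c d :=
  (etaf_continuous a b).intervalIntegrable _ _

noncomputable def psif (r c : ℝ) : ℝ → ℝ := fun x =>
  Real.smoothTransition ((x - c + r)/(2*r))

lemma psif_nonneg (r c x : ℝ) : 0 ≤ psif r c x := Real.smoothTransition.nonneg _

lemma psif_le_one (r c x : ℝ) : psif r c x ≤ 1 := Real.smoothTransition.le_one _

lemma psif_eq_zero (r c x : ℝ) (hr : 0 < r) (h : x ≤ c - r) : psif r c x = 0 := by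
  unfold psif
  exact Real.smoothTransition.zero_of_nonpos
    (div_nonpos_iff.mpr (Or.inr ⟨by linarith, by linarith⟩))

lemma psif_eq_one (r c x : ℝ) (hr : 0 < r) (h : c + r ≤ x) : psif r c x = 1 := by
  unfold psif
  exact Real.smoothTransition.one_of_one_le ((one_le_div (by linarith)).mpr (by linarith))

lemma psif_contDiff (r c : ℝ) : ContDiff ℝ 1 (psif r c) := by
  unfold psif
  exact Real.smoothTransition.contDiff.comp
    (((contDiff_id.sub contDiff_const).add contDiff_const).div_const _)

theorem test_stub : True := trivial

noncomputable def Ffun (a b s0 : ℝ) : ℝ → ℝ := fun x => ∫ t in s0..x, etaf a b t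

lemma Ffun_hasDerivAt (a b s0 x : ℝ) : HasDerivAt (Ffun a b s0) (etaf a b x) x :=
  intervalIntegral.integral_hasDerivAt_right (etaf_intble a b _ _)
    ((etaf_continuous a b).stronglyMeasurableAtFilter _ _) (etaf_continuous a b).continuousAt

lemma Ffun_contDiff (a b s0 : ℝ) : ContDiff ℝ 1 (Ffun a b s0) := by
  rw [contDiff_one_iff_deriv]
  refine ⟨fun x => (Ffun_hasDerivAt a b s0 x).differentiableAt, ?_⟩
  have : deriv (Ffun a b s0) = etaf a b := funext fun x => (Ffun_hasDerivAt a b s0 x).deriv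
  rw [this]; exact etaf_continuous a b

noncomputable def cfun (a b : ℝ) (s : ℕ → ℝ) (i : ℕ) : ℝ :=
  ∫ t in (s i)..(s (i+1)), etaf a b t

noncomputable def gfun (a b : ℝ) (s : ℕ → ℝ) (i : ℕ) (x : ℝ) : ℝ :=
  ∫ t in (s i)..(max (s i) (min x (s (i+1)))), etaf a b t

section gprops
set_option linter.unusedSectionVars false

variable {a b : ℝ} {s : ℕ → ℝ} (hmono : ∀ i j : ℕ, i ≤ j → s i ≤ s j)
include hmono

lemma cfun_nonneg (i : ℕ) : 0 ≤ cfun a b s i :=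
  intervalIntegral.integral_nonneg (hmono i (i+1) (by omega)) (fun t _ => etaf_nonneg a b t)

lemma cfun_le (i : ℕ) : cfun a b s i ≤ s (i+1) - s i := by
  have h := intervalIntegral.integral_mono_on (f := etaf a b) (g := fun _ => (1:ℝ))
    (μ := volume) (hmono i (i+1) (by omega)) (etaf_intble a b _ _)
    (intervalIntegrable_const) (fun t _ => etaf_le_one a b t)
  simpa [cfun] using h

lemma gfun_nonneg (i : ℕ) (x : ℝ) : 0 ≤ gfun a b s i x :=
  intervalIntegral.integral_nonneg (le_max_left _ _) (fun t _ => etaf_nonneg a b t)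

lemma gfun_le (i : ℕ) (x : ℝ) : gfun a b s i x ≤ cfun a b s i := by
  have hm : max (s i) (min x (s (i+1))) ≤ s (i+1) :=
    max_le (hmono i (i+1) (by omega)) (min_le_right _ _)
  have hadd := intervalIntegral.integral_add_adjacent_intervals
    (a := s i) (b := max (s i) (min x (s (i+1)))) (c := s (i+1))
    (etaf_intble a b _ _) (etaf_intble a b _ _)
  have h2 : 0 ≤ ∫ t in (max (s i) (min x (s (i+1))))..(s (i+1)), etaf a b t :=
    intervalIntegral.integral_nonneg hm (fun t _ => etaf_nonneg a b t)
  unfold gfun cfun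
  rw [← hadd]
  linarith

lemma gfun_full (i : ℕ) (x : ℝ) (h : s (i+1) ≤ x) : gfun a b s i x = cfun a b s i := by
  unfold gfun cfun
  rw [min_eq_right h, max_eq_right (hmono i (i+1) (by omega))]

lemma gfun_zero (i : ℕ) (x : ℝ) (h : x ≤ s i) : gfun a b s i x = 0 := by
  unfold gfun
  rw [min_eq_left (h.trans (hmono i (i+1) (by omega))), max_eq_left h,
    intervalIntegral.integral_same]

lemma Ffun_eq_sum_aux (n : ℕ) (x : ℝ) :
    (∫ t in (s 0)..(max (s 0) (min x (s n))), etaf a b t) =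
      ∑ i ∈ Finset.range n, gfun a b s i x := by
  induction n with
  | zero =>
      rw [max_eq_left (min_le_right x (s 0)), intervalIntegral.integral_same]
      simp
  | succ n ih =>
      rw [Finset.sum_range_succ, ← ih]
      rcases le_total x (s n) with h | h
      · have h1 : min x (s (n+1)) = x := min_eq_left (h.trans (hmono n (n+1) (by omega)))
        have h2 : min x (s n) = x := min_eq_left h
        rw [h1, h2, gfun_zero hmono n x h, add_zero]
      · have hs0n : s 0 ≤ s n := hmono 0 n (by omega)
        have h1 : max (s 0) (min x (s n)) = s n := by
          rw [min_eq_right h]; exact max_eq_right hs0n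
        have h2 : max (s 0) (min x (s (n+1))) = min x (s (n+1)) :=
          max_eq_right (hs0n.trans (le_min h (hmono n (n+1) (by omega))))
        have h3 : max (s n) (min x (s (n+1))) = min x (s (n+1)) :=
          max_eq_right (le_min h (hmono n (n+1) (by omega)))
        rw [h1, h2]
        show _ = _ + gfun a b s n x
        unfold gfun
        rw [h3]
        exact (intervalIntegral.integral_add_adjacent_intervals
          (etaf_intble a b _ _) (etaf_intble a b _ _)).symm



lemma Ffun_eq_sum (hab : a ≤ b) (N : ℕ) (hl : s 0 < a - 1/2) (hr : b + 3/4 < s N) (x : ℝ) :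
    Ffun a b (s 0) x = ∑ i ∈ Finset.range N, gfun a b s i x := by
  rw [← Ffun_eq_sum_aux hmono N x]
  rcases le_total x (s 0) with h | h
  · have h1 : max (s 0) (min x (s N)) = s 0 := max_eq_left (min_le_of_left_le h)
    rw [h1, intervalIntegral.integral_same]
    unfold Ffun
    rw [intervalIntegral.integral_congr (g := fun _ => (0:ℝ)) ?_, intervalIntegral.integral_zero]
    intro t ht
    rw [Set.uIcc_of_ge h] at ht
    exact etaf_eq_zero_left a b t (by linarith [ht.2])
  · rcases le_total x (s N) with h2 | h2
    · rw [min_eq_left h2, max_eq_right h]; rfl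
    · have h1 : max (s 0) (min x (s N)) = s N := by
        rw [min_eq_right h2]; exact max_eq_right (hmono 0 N (by omega))
      rw [h1]
      unfold Ffun
      rw [← intervalIntegral.integral_add_adjacent_intervals (b := s N)
        (etaf_intble a b _ _) (etaf_intble a b _ _)]
      have hz : (∫ t in (s N)..x, etaf a b t) = 0 := by
        rw [intervalIntegral.integral_congr (g := fun _ => (0:ℝ)) ?_,
          intervalIntegral.integral_zero]
        intro t ht
        rw [Set.uIcc_of_le h2] at ht
        exact etaf_eq_zero_right a b t (by linarith [ht.1])
      rw [hz, add_zero]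

end gprops

lemma key_construct (K : Set ℝ) (hKc : IsCompact K) (hKne : K.Nonempty)
    (hKint : interior K = ∅) (δ : ℝ) (hδ : 0 < δ) (hδ4 : δ ≤ 1/4) :
    ∃ u : ℝ → ℝ, ContDiff ℝ 1 u ∧ HasCompactSupport u ∧
      (∀ x ∈ K, HasDerivAt u 1 x) ∧ (∀ x, |u x| ≤ 2 * δ) := by
  classical
  set a := sInf K with ha
  set b := sSup K with hb
  have haK : ∀ x ∈ K, a ≤ x := fun x hx => csInf_le hKc.bddBelow hx
  have hbK : ∀ x ∈ K, x ≤ b := fun x hx => le_csSup hKc.bddAbove hx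
  have hab : a ≤ b := by
    obtain ⟨x, hx⟩ := hKne; exact (haK x hx).trans (hbK x hx)
  have hdense : ∀ c : ℝ, ∃ t, (c < t ∧ t < c + δ/4) ∧ t ∉ K := by
    intro c
    have hne : (Set.Ioo c (c + δ/4)).Nonempty := by rw [Set.nonempty_Ioo]; linarith
    by_contra hcon
    push_neg at hcon
    have hsub : Set.Ioo c (c + δ/4) ⊆ K := fun t ht => hcon t ⟨ht.1, ht.2⟩
    have h2 : Set.Ioo c (c + δ/4) ⊆ interior K := interior_maximal hsub isOpen_Ioo
    rw [hKint] at h2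
    obtain ⟨t, ht⟩ := hne
    exact h2 ht
  choose s hs hsK using fun i : ℕ => hdense (a - 1 + i * (δ/2))
  have hgap : ∀ i j : ℕ, i < j → s i + δ/4 < s j := by
    intro i j hij
    have h1 := (hs i).2
    have h2 := (hs j).1
    have hij' : (i:ℝ) + 1 ≤ (j:ℝ) := by exact_mod_cast hij
    have h3 : ((i:ℝ)+1)*(δ/2) ≤ (j:ℝ)*(δ/2) :=
      mul_le_mul_of_nonneg_right hij' (by linarith)
    nlinarith
  have hmono : ∀ i j : ℕ, i ≤ j → s i ≤ s j := by
    intro i j hij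
    rcases eq_or_lt_of_le hij with rfl | h
    · exact le_refl _
    · linarith [hgap i j h]
  set N := ⌈(b + 2 - a) * (2/δ)⌉₊ + 1 with hNdef
  have hNge : b + 1 ≤ a - 1 + N * (δ/2) := by
    have h1 : (b + 2 - a) * (2/δ) ≤ (N:ℝ) := by
      calc (b+2-a)*(2/δ) ≤ (⌈(b + 2 - a) * (2/δ)⌉₊ : ℝ) := Nat.le_ceil _
        _ ≤ (N:ℝ) := by rw [hNdef]; push_cast; linarith
    have h2 : (b + 2 - a) * (2/δ) * (δ/2) ≤ (N:ℝ) * (δ/2) :=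
      mul_le_mul_of_nonneg_right h1 (by linarith)
    have h3 : (b + 2 - a) * (2/δ) * (δ/2) = b + 2 - a := by
      field_simp
    linarith
  have hs0 : s 0 < a - 1/2 := by
    have h1 := (hs 0).2; push_cast at h1; linarith
  have hsN : b + 3/4 < s N := by
    have h1 := (hs N).1; linarith
  have hcδ : ∀ i : ℕ, cfun a b s i ≤ δ := by
    intro i
    have h1 := (hs i).1
    have h2 := (hs (i+1)).2
    have h3 := cfun_le (a := a) (b := b) hmono i
    push_cast at h1 h2
    linarith
  -- the spike radius r
  have hdK : ∀ i : ℕ, 0 < Metric.infDist (s i) K :=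
    fun i => (hKc.isClosed.notMem_iff_infDist_pos hKne).1 (hsK i)
  set r := min (δ/16) ((Finset.range (N+1)).inf' (by simp) fun i => Metric.infDist (s i) K / 2)
    with hrdef
  have hr0 : 0 < r := by
    apply lt_min (by linarith)
    rw [Finset.lt_inf'_iff]
    intro i _
    linarith [hdK i]
  have hr16 : r ≤ δ/16 := min_le_left _ _
  have hrK : ∀ i : ℕ, i ≤ N → ∀ x ∈ K, 2*r ≤ |x - s i| := by
    intro i hi x hx
    have h1 : r ≤ Metric.infDist (s i) K / 2 :=
      (min_le_right _ _).trans (Finset.inf'_le _ (Finset.mem_range.mpr (by omega)))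
    have h2 : Metric.infDist (s i) K ≤ dist (s i) x := Metric.infDist_le_dist_of_mem hx
    rw [Real.dist_eq, abs_sub_comm] at h2
    linarith
  set u : ℝ → ℝ := fun x =>
    Ffun a b (s 0) x - ∑ i ∈ Finset.range N, cfun a b s i * psif r (s (i+1)) x with hu
  have husum : ∀ x, u x =
      ∑ i ∈ Finset.range N, (gfun a b s i x - cfun a b s i * psif r (s (i+1)) x) := by
    intro x
    simp only [hu]
    rw [Ffun_eq_sum hmono hab N hs0 hsN x, Finset.sum_sub_distrib]
  -- upper bound
  have hub : ∀ x, u x ≤ 2*δ := by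
    intro x
    rw [husum x]
    have h1 : ∀ i ∈ Finset.range N,
        gfun a b s i x - cfun a b s i * psif r (s (i+1)) x ≤
          (if s i < x ∧ x < s (i+1) + r then δ else 0) := by
      intro i _
      by_cases hc : s i < x ∧ x < s (i+1) + r
      · rw [if_pos hc]
        have h2 := gfun_le (a := a) (b := b) hmono i x
        have h3 : 0 ≤ cfun a b s i * psif r (s (i+1)) x :=
          mul_nonneg (cfun_nonneg hmono i) (psif_nonneg _ _ _)
        linarith [hcδ i]
      · rw [if_neg hc]
        push_neg at hc
        by_cases hx1 : s i < x
        · have h2 := hc hx1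
          rw [psif_eq_one r (s (i+1)) x hr0 h2, mul_one]
          have h3 := gfun_le (a := a) (b := b) hmono i x
          linarith
        · push_neg at hx1
          rw [gfun_zero hmono i x hx1]
          have h3 : 0 ≤ cfun a b s i * psif r (s (i+1)) x :=
            mul_nonneg (cfun_nonneg hmono i) (psif_nonneg _ _ _)
          linarith
    have hcard : ((Finset.range N).filter (fun i => s i < x ∧ x < s (i+1) + r)).card ≤ 2 := by
      apply card_le_two_aux
      intro i hi j hj hij
      by_contra hcon
      have hij2 : i + 2 ≤ j := by omega
      simp only [Finset.mem_filter, Finset.mem_range] at hi hj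
      have h4 := hgap (i+1) j (by omega)
      linarith [hi.2.2, hj.2.1]
    calc ∑ i ∈ Finset.range N, (gfun a b s i x - cfun a b s i * psif r (s (i+1)) x)
        ≤ ∑ i ∈ Finset.range N, (if s i < x ∧ x < s (i+1) + r then δ else 0) :=
          Finset.sum_le_sum h1
      _ = ∑ _i ∈ (Finset.range N).filter (fun i => s i < x ∧ x < s (i+1) + r), δ :=
          (Finset.sum_filter _ _).symm
      _ = ((Finset.range N).filter (fun i => s i < x ∧ x < s (i+1) + r)).card • δ :=
          Finset.sum_const δ
      _ ≤ 2*δ := by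
          rw [nsmul_eq_mul]
          have : (((Finset.range N).filter (fun i => s i < x ∧ x < s (i+1) + r)).card : ℝ) ≤ 2 := by
            exact_mod_cast hcard
          nlinarith
  -- lower bound
  have hlb : ∀ x, -(2*δ) ≤ u x := by
    intro x
    rw [husum x]
    have h1 : ∀ i ∈ Finset.range N,
        (if s (i+1) - r < x ∧ x < s (i+1) then -δ else 0) ≤
          gfun a b s i x - cfun a b s i * psif r (s (i+1)) x := by
      intro i _
      by_cases hc : s (i+1) - r < x ∧ x < s (i+1)
      · rw [if_pos hc]
        have h2 := gfun_nonneg (a := a) (b := b) hmono i x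
        have h3 : cfun a b s i * psif r (s (i+1)) x ≤ cfun a b s i :=
          mul_le_of_le_one_right (cfun_nonneg hmono i) (psif_le_one _ _ _)
        linarith [hcδ i]
      · rw [if_neg hc]
        push_neg at hc
        by_cases hx1 : s (i+1) - r < x
        · have h2 := hc hx1
          rw [gfun_full hmono i x h2]
          have h3 : cfun a b s i * psif r (s (i+1)) x ≤ cfun a b s i :=
            mul_le_of_le_one_right (cfun_nonneg hmono i) (psif_le_one _ _ _)
          linarith
        · push_neg at hx1
          rw [psif_eq_zero r (s (i+1)) x hr0 hx1, mul_zero, sub_zero]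
          exact gfun_nonneg hmono i x
    have hcard : ((Finset.range N).filter (fun i => s (i+1) - r < x ∧ x < s (i+1))).card ≤ 2 := by
      apply card_le_two_aux
      intro i hi j hj hij
      exfalso
      simp only [Finset.mem_filter, Finset.mem_range] at hi hj
      have h4 := hgap (i+1) (j+1) (by omega)
      linarith [hi.2.2, hj.2.1]
    have h2 : -(2*δ) ≤
        ∑ i ∈ Finset.range N, (if s (i+1) - r < x ∧ x < s (i+1) then -δ else 0) := by
      rw [← Finset.sum_filter, Finset.sum_const, nsmul_eq_mul]
      have : (((Finset.range N).filter (fun i => s (i+1) - r < x ∧ x < s (i+1))).card : ℝ) ≤ 2 := by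
        exact_mod_cast hcard
      nlinarith
    exact h2.trans (Finset.sum_le_sum h1)
  -- compact support
  have hz : ∀ x, x ∉ Set.Icc (s 0) (s N + r) → u x = 0 := by
    intro x hx
    rw [husum x]
    apply Finset.sum_eq_zero
    intro i hi
    rw [Finset.mem_range] at hi
    rw [Set.mem_Icc] at hx
    push_neg at hx
    rcases lt_or_ge x (s 0) with h | h
    · have hg := hgap 0 (i+1) (by omega)
      have hψ : x ≤ s (i+1) - r := by linarith
      rw [gfun_zero hmono i x (h.le.trans (hmono 0 i (by omega))),
        psif_eq_zero r (s (i+1)) x hr0 hψ, mul_zero, sub_zero]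
    · have h2 := hx h
      have h3 := hmono (i+1) N (by omega)
      rw [gfun_full hmono i x (by linarith), psif_eq_one r (s (i+1)) x hr0 (by linarith),
        mul_one, sub_self]
  have hsupp : HasCompactSupport u := HasCompactSupport.intro isCompact_Icc hz
  have hcd : ContDiff ℝ 1 u := by
    apply (Ffun_contDiff a b (s 0)).sub
    exact ContDiff.sum fun i _ => contDiff_const.mul (psif_contDiff r (s (i+1)))
  have hder : ∀ x ∈ K, HasDerivAt u 1 x := by
    intro x hx
    have hS : (fun y => ∑ i ∈ Finset.range N, cfun a b s i * psif r (s (i+1)) y)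
        =ᶠ[𝓝 x] (fun _ => ∑ i ∈ Finset.range N, cfun a b s i * psif r (s (i+1)) x) := by
      filter_upwards [Metric.ball_mem_nhds x hr0] with y hy
      apply Finset.sum_congr rfl
      intro i hi
      rw [Finset.mem_range] at hi
      have h2r := hrK (i+1) (by omega) x hx
      rw [Metric.mem_ball, Real.dist_eq] at hy
      have hy1 : y - x < r := (le_abs_self _).trans_lt hy
      have hy2 : x - y < r := by
        have := (neg_abs_le (y - x)).trans_lt' (neg_lt_neg hy)
        linarith [abs_nonneg (y - x), neg_le_abs (y - x)]
      congr 1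
      rcases le_or_gt x (s (i+1)) with hcase | hcase
      · have h5 : 2*r ≤ s (i+1) - x := by
          rw [abs_of_nonpos (by linarith)] at h2r; linarith
        rw [psif_eq_zero r (s (i+1)) y hr0 (by linarith),
          psif_eq_zero r (s (i+1)) x hr0 (by linarith)]
      · have h5 : 2*r ≤ x - s (i+1) := by
          rw [abs_of_pos (by linarith)] at h2r; linarith
        rw [psif_eq_one r (s (i+1)) y hr0 (by linarith),
          psif_eq_one r (s (i+1)) x hr0 (by linarith)]
    have hd1 : HasDerivAt
        (fun y => ∑ i ∈ Finset.range N, cfun a b s i * psif r (s (i+1)) y) 0 x :=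
      (hasDerivAt_const x _).congr_of_eventuallyEq hS
    have hd2 : HasDerivAt (Ffun a b (s 0)) 1 x := by
      have h6 := Ffun_hasDerivAt a b (s 0) x
      rwa [etaf_eq_one a b x (haK x hx) (hbK x hx)] at h6
    have h7 := hd2.sub hd1
    rw [sub_zero] at h7
    exact h7
  exact ⟨u, hcd, hsupp, hder, fun x => abs_le.mpr ⟨hlb x, hub x⟩⟩


/-- **Non-closability of the derivative over a totally disconnected set of positive
measure.** Let `K ⊂ ℝ` be compact, totally disconnected, of positive Lebesgue measure,
and let `μ = 𝓛¹ ⌞ K`. Then for all `1 ≤ p, q ≤ ∞` the derivative is not closable from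
`L^q(μ)` to `Lᵖ(μ)`: there are `uₙ ∈ C¹_c(ℝ)` and `w ∈ Lᵖ(μ)` nonzero on a set of
positive μ-measure with `uₙ → 0` in `L^q(μ)` and `uₙ' → w` in `Lᵖ(μ)`. -/
theorem stmt15 (K : Set ℝ) (hKc : IsCompact K) (hKtd : IsTotallyDisconnected K)
    (hKpos : 0 < volume K)
    (μ : Measure ℝ) (hμ : μ = volume.restrict K)
    (p q : ℝ≥0∞) (hp : 1 ≤ p) (hq : 1 ≤ q) :
    ∃ (u : ℕ → ℝ → ℝ) (w : ℝ → ℝ),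
      (∀ n, ContDiff ℝ 1 (u n) ∧ HasCompactSupport (u n)) ∧
      MemLp w p μ ∧ 0 < μ {x | w x ≠ 0} ∧
      Tendsto (fun n => eLpNorm (u n) q μ) atTop (𝓝 0) ∧
      Tendsto (fun n => eLpNorm (fun x => deriv (u n) x - w x) p μ) atTop (𝓝 0) := by
  subst hμ
  have hKmeas : MeasurableSet K := hKc.isClosed.measurableSet
  have hKne : K.Nonempty := by
    rcases Set.eq_empty_or_nonempty K with rfl | h
    · simp at hKpos
    · exact h
  have hKint : interior K = ∅ := by
    by_contra h
    obtain ⟨x, hx⟩ := Set.nonempty_iff_ne_empty.mpr h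
    obtain ⟨ε, hε, hball⟩ := Metric.isOpen_iff.mp isOpen_interior x hx
    have hsub : Metric.ball x ε ⊆ K := hball.trans interior_subset
    have hsing := hKtd _ hsub (convex_ball x ε).isPreconnected
    have h1 : x ∈ Metric.ball x ε := Metric.mem_ball_self hε
    have h2 : x + ε/2 ∈ Metric.ball x ε := by
      rw [Metric.mem_ball, Real.dist_eq]
      have h3 : x + ε/2 - x = ε/2 := by ring
      rw [h3, abs_of_pos (by linarith)]
      linarith
    have h4 := hsing h2 h1
    linarith
  haveI : IsFiniteMeasure (volume.restrict K) :=
    ⟨by rw [Measure.restrict_apply_univ]; exact hKc.measure_lt_top⟩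
  have hconstruct : ∀ n : ℕ, ∃ u : ℝ → ℝ, ContDiff ℝ 1 u ∧ HasCompactSupport u ∧
      (∀ x ∈ K, HasDerivAt u 1 x) ∧ (∀ x, |u x| ≤ 2 * (1/(4*((n:ℝ)+1)))) := by
    intro n
    apply key_construct K hKc hKne hKint (1/(4*((n:ℝ)+1))) (by positivity)
    rw [div_le_div_iff₀ (by positivity) (by norm_num)]
    nlinarith [Nat.cast_nonneg (α := ℝ) n]
  choose u hu1 hu2 hu3 hu4 using hconstruct
  refine ⟨u, fun _ => 1, fun n => ⟨hu1 n, hu2 n⟩, memLp_const 1, ?_, ?_, ?_⟩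
  · have hset : {x : ℝ | (fun _ : ℝ => (1:ℝ)) x ≠ 0} = Set.univ := by
      ext x; simp
    rw [hset, Measure.restrict_apply_univ]
    exact hKpos
  · have hbound : ∀ n : ℕ, eLpNorm (u n) q (volume.restrict K) ≤
        (volume.restrict K) Set.univ ^ q.toReal⁻¹ *
          ENNReal.ofReal (2 * (1/(4*((n:ℝ)+1)))) := by
      intro n
      apply eLpNorm_le_of_ae_bound
      exact ae_of_all _ fun x => by rw [Real.norm_eq_abs]; exact hu4 n x
    have hM_ne : (volume.restrict K) Set.univ ^ q.toReal⁻¹ ≠ ∞ := by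
      apply ENNReal.rpow_ne_top_of_nonneg (by positivity)
      rw [Measure.restrict_apply_univ]
      exact hKc.measure_lt_top.ne
    have h1 : Tendsto (fun n : ℕ => (2 * (1/(4*((n:ℝ)+1))))) atTop (𝓝 0) := by
      have h0 := tendsto_one_div_add_atTop_nhds_zero_nat.const_mul (1/2 : ℝ)
      rw [mul_zero] at h0
      have heq : (fun n : ℕ => 2*(1/(4*((n:ℝ)+1)))) = fun n : ℕ => (1/2)*(1/((n:ℝ)+1)) := by
        funext n
        have : (4:ℝ)*((n:ℝ)+1) ≠ 0 := by positivity
        field_simp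
        ring
      rw [heq]
      exact h0
    have h2 : Tendsto (fun n : ℕ => ENNReal.ofReal (2 * (1/(4*((n:ℝ)+1))))) atTop (𝓝 0) := by
      rw [← ENNReal.ofReal_zero]
      exact ENNReal.tendsto_ofReal h1
    have hlim := ENNReal.Tendsto.const_mul h2
      (Or.inr hM_ne)
    rw [mul_zero] at hlim
    exact tendsto_of_tendsto_of_tendsto_of_le_of_le tendsto_const_nhds hlim
      (fun n => zero_le) (fun n => hbound n)
  · have hzero : ∀ n, eLpNorm (fun x => deriv (u n) x - (fun _ : ℝ => (1:ℝ)) x) p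
        (volume.restrict K) = 0 := by
      intro n
      have hae : (fun x => deriv (u n) x - (fun _ : ℝ => (1:ℝ)) x)
          =ᵐ[volume.restrict K] 0 := by
        filter_upwards [ae_restrict_mem hKmeas] with x hx
        simp only [Pi.zero_apply]
        rw [(hu3 n x hx).deriv]
        ring
      rw [eLpNorm_congr_ae hae, eLpNorm_zero]
    have heq : (fun n => eLpNorm (fun x => deriv (u n) x - (fun _ : ℝ => (1:ℝ)) x) p
        (volume.restrict K)) = fun _ => 0 := funext hzero
    rw [heq]
    exact tendsto_const_nhds
end
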